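/- Let A be a finite multisubset of ℤ_p^n with a Liouville partition A = 𝒜₁ ∪ ⋯ ∪ 𝒜_k in the r-th direction. If B₁,…,B_k are multisubsets of ℤ_p^n such that the r-th coordinate multiset B_j^r is weakly equivalent to 𝒜_j^r for each j, then B₁,…,B_k form a Liouville partition in the r-th direction of B = ⋃_j B_j. -/

import Mathlib

/-- `⟨a⟩ₕ = min { n ∈ ℤ_{>0} : a + n ∈ p^h ℤ_p or a - n ∈ p^h ℤ_p }`. -/
noncomputable def padicBracket (p : ℕ) [Fact p.Prime] (a : ℤ_[p]) (h : ℕ) : ℕ :=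
  sInf {n : ℕ | 0 < n ∧ ((p : ℤ_[p]) ^ h ∣ a + (n : ℤ_[p]) ∨ (p : ℤ_[p]) ^ h ∣ a - (n : ℤ_[p]))}

/-- `a` is a p-adic Liouville number: `a ∉ ℤ` and `liminf ⟨a⟩ₘ/m < ∞`,
i.e. some constant `C` satisfies `⟨a⟩ₘ ≤ C·m` for infinitely many `m`. -/
def IsPadicLiouville (p : ℕ) [Fact p.Prime] (a : ℤ_[p]) : Prop :=
  (¬ ∃ z : ℤ, (z : ℤ_[p]) = a) ∧
    ∃ C : ℝ, ∀ m₀ : ℕ, ∃ m : ℕ, m₀ ≤ m ∧ 0 < m ∧ (padicBracket p a m : ℝ) ≤ C * m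

/-- Weak equivalence of two families `a b : Fin s → ℤ_p` (multisubsets of `ℤ_p`). -/
def WeakEquiv1 (p : ℕ) [Fact p.Prime] {s : ℕ} (a b : Fin s → ℤ_[p]) : Prop :=
  ∃ c : ℝ, 0 < c ∧ ∃ σ : ℕ → Equiv.Perm (Fin s),
    ∀ h : ℕ, 0 < h → ∀ j : Fin s, (padicBracket p (a (σ h j) - b j) h : ℝ) ≤ c * h

/-- The families `𝒜 j : Fin (m j) → ℤ_p^n` (`j = 1,…,k`) form a Liouville partition
(of their multiset union) in the `r`-th direction: for `l < m` and `a ∈ 𝒜_l`,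
`b ∈ 𝒜_m`, the difference of `r`-th coordinates is p-adic non-Liouville and
not an integer. -/
def IsLiouvillePartitionDir (p : ℕ) [Fact p.Prime] {n k : ℕ} {m : Fin k → ℕ}
    (𝒜 : (j : Fin k) → Fin (m j) → (Fin n → ℤ_[p])) (r : Fin n) : Prop :=
  ∀ l mm : Fin k, l < mm → ∀ (a : Fin (m l)) (b : Fin (m mm)),
    ¬ IsPadicLiouville p (𝒜 l a r - 𝒜 mm b r) ∧
      ¬ ∃ z : ℤ, (z : ℤ_[p]) = 𝒜 l a r - 𝒜 mm b r

namespace Stmt9Aux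

variable {p : ℕ} [Fact p.Prime]

lemma absCast (z : ℤ) : |(z : ℝ)| = ((z.natAbs : ℕ) : ℝ) := by
  rw [← Int.cast_abs, Int.abs_eq_natAbs, Int.cast_natCast]

lemma bracketSet_nonempty (x : ℤ_[p]) (h : ℕ) :
    {n : ℕ | 0 < n ∧ ((p : ℤ_[p]) ^ h ∣ x + (n : ℤ_[p]) ∨ (p : ℤ_[p]) ^ h ∣ x - (n : ℤ_[p]))}.Nonempty := by
  have hspec : (p : ℤ_[p]) ^ h ∣ x - (x.appr h : ℤ_[p]) := by
    have := PadicInt.appr_spec h x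
    rwa [Ideal.mem_span_singleton] at this
  rcases Nat.eq_zero_or_pos (x.appr h) with h0 | hpos
  · refine ⟨p ^ h, pow_pos (Fact.out : p.Prime).pos h, Or.inr ?_⟩
    rw [h0] at hspec
    push_cast at hspec ⊢
    simpa using dvd_sub hspec (dvd_refl _)
  · exact ⟨x.appr h, hpos, Or.inr hspec⟩

lemma bracket_mem (x : ℤ_[p]) (h : ℕ) :
    0 < padicBracket p x h ∧
      ((p : ℤ_[p]) ^ h ∣ x + (padicBracket p x h : ℤ_[p]) ∨
        (p : ℤ_[p]) ^ h ∣ x - (padicBracket p x h : ℤ_[p])) :=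
  Nat.sInf_mem (bracketSet_nonempty x h)

lemma bracket_le {x : ℤ_[p]} {h n : ℕ} (hn : 0 < n)
    (hd : (p : ℤ_[p]) ^ h ∣ x + (n : ℤ_[p]) ∨ (p : ℤ_[p]) ^ h ∣ x - (n : ℤ_[p])) :
    padicBracket p x h ≤ n :=
  Nat.sInf_le ⟨hn, hd⟩

/-- A nonzero integer witness gives a bracket bound. -/
lemma bracket_le_natAbs {x : ℤ_[p]} {h : ℕ} {z : ℤ} (hz : z ≠ 0)
    (hd : (p : ℤ_[p]) ^ h ∣ x - (z : ℤ_[p])) : padicBracket p x h ≤ z.natAbs := by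
  rcases lt_or_gt_of_ne hz with hneg | hpos
  · refine bracket_le (by omega) (Or.inl ?_)
    have h3 : (z.natAbs : ℤ) = -z := by omega
    have h4 : ((z.natAbs : ℕ) : ℤ_[p]) = -(z : ℤ_[p]) := by
      rw [← Int.cast_natCast (R := ℤ_[p]), h3, Int.cast_neg]
    rw [h4]
    simpa [sub_eq_add_neg] using hd
  · refine bracket_le (by omega) (Or.inr ?_)
    have h3 : (z.natAbs : ℤ) = z := by omega
    have h4 : ((z.natAbs : ℕ) : ℤ_[p]) = (z : ℤ_[p]) := by
      rw [← Int.cast_natCast (R := ℤ_[p]), h3]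
    rwa [h4]

/-- Conversely, the bracket is witnessed by a nonzero integer. -/
lemma exists_int_witness (x : ℤ_[p]) (h : ℕ) :
    ∃ z : ℤ, z ≠ 0 ∧ z.natAbs = padicBracket p x h ∧ (p : ℤ_[p]) ^ h ∣ x - (z : ℤ_[p]) := by
  obtain ⟨hpos, hd | hd⟩ := bracket_mem x h
  · exact ⟨-(padicBracket p x h : ℤ), by omega, by omega, by push_cast; simpa [sub_neg_eq_add] using hd⟩
  · exact ⟨(padicBracket p x h : ℤ), by omega, by omega, by push_cast; exact hd⟩

/-- `Good x h K`: either the bracket is at most `K`, or `p^h ∣ x`. -/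
def Good (p : ℕ) [Fact p.Prime] (x : ℤ_[p]) (h : ℕ) (K : ℝ) : Prop :=
  (padicBracket p x h : ℝ) ≤ K ∨ (p : ℤ_[p]) ^ h ∣ x

lemma Good.mono {x : ℤ_[p]} {h : ℕ} {K K' : ℝ} (hg : Good p x h K) (hK : K ≤ K') :
    Good p x h K' := hg.imp (fun hx => hx.trans hK) id

/-- Every `Good x h K` (with `0 ≤ K`) yields an integer witness `z`, `|z| ≤ K`,
with `p^h ∣ x - z` (take `z = 0` in the divisibility case). -/
lemma Good.witness {x : ℤ_[p]} {h : ℕ} {K : ℝ} (hg : Good p x h K) (hK : 0 ≤ K) :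
    ∃ z : ℤ, (|z| : ℝ) ≤ K ∧ (p : ℤ_[p]) ^ h ∣ x - (z : ℤ_[p]) := by
  rcases hg with hb | hd
  · obtain ⟨z, _, hzabs, hzd⟩ := exists_int_witness x h
    refine ⟨z, ?_, hzd⟩
    rw [← hzabs] at hb
    rwa [absCast]
  · exact ⟨0, by simpa using hK, by simpa using hd⟩

lemma Good.of_witness {x : ℤ_[p]} {h : ℕ} {K : ℝ} {z : ℤ}
    (hzd : (p : ℤ_[p]) ^ h ∣ x - (z : ℤ_[p])) (habs : (|z| : ℝ) ≤ K) : Good p x h K := by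
  rcases eq_or_ne z 0 with rfl | hz
  · exact Or.inr (by simpa using hzd)
  · refine Or.inl ?_
    rw [absCast] at habs
    have hb := bracket_le_natAbs hz hzd
    exact le_trans (by exact_mod_cast hb) habs

lemma Good.add {x y : ℤ_[p]} {h : ℕ} {K₁ K₂ : ℝ} (hx : Good p x h K₁) (hy : Good p y h K₂)
    (hK₁ : 0 ≤ K₁) (hK₂ : 0 ≤ K₂) : Good p (x + y) h (K₁ + K₂) := by
  obtain ⟨z₁, hz₁, hd₁⟩ := hx.witness hK₁
  obtain ⟨z₂, hz₂, hd₂⟩ := hy.witness hK₂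
  have hd : (p : ℤ_[p]) ^ h ∣ (x + y) - ((z₁ + z₂ : ℤ) : ℤ_[p]) := by
    push_cast
    have := dvd_add hd₁ hd₂
    convert this using 1; ring
  refine Good.of_witness hd ?_
  have habs : |((z₁ + z₂ : ℤ) : ℝ)| ≤ |(z₁ : ℝ)| + |(z₂ : ℝ)| := by
    push_cast; exact abs_add_le _ _
  exact habs.trans (add_le_add hz₁ hz₂)

lemma Good.neg {x : ℤ_[p]} {h : ℕ} {K : ℝ} (hx : Good p x h K) (hK : 0 ≤ K) :
    Good p (-x) h K := by
  obtain ⟨z, hz, hd⟩ := hx.witness hK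
  refine Good.of_witness (z := -z) ?_ (by simpa using hz)
  push_cast
  simpa [neg_sub, sub_eq_add_neg, add_comm] using (dvd_neg).2 hd

/-- If `p^h ∣ x` for arbitrarily large `h`, then `x = 0`. -/
lemma eq_zero_of_forall_dvd {x : ℤ_[p]} (H : ∀ m₀ : ℕ, ∃ h : ℕ, m₀ ≤ h ∧ (p : ℤ_[p]) ^ h ∣ x) :
    x = 0 := by
  by_contra hx
  obtain ⟨h, hh, hd⟩ := H (x.valuation + 1)
  have : h ≤ x.valuation := by
    rw [← PadicInt.mem_span_pow_iff_le_valuation x hx h, Ideal.mem_span_singleton]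
    exact hd
  have hv : 0 ≤ x.valuation := Nat.zero_le _
  omega

/-- Pigeonhole: a property holding for arbitrarily large `h` at *some* index of a
finite nonempty type holds at a fixed index for arbitrarily large `h`. -/
lemma pigeonhole {ι : Type*} [Fintype ι] [Nonempty ι] (P : ℕ → ι → Prop)
    (H : ∀ m₀ : ℕ, ∃ h : ℕ, m₀ ≤ h ∧ ∃ i : ι, P h i) :
    ∃ i : ι, ∀ m₀ : ℕ, ∃ h : ℕ, m₀ ≤ h ∧ P h i := by
  by_contra hcon
  push_neg at hcon
  choose M hM using hcon
  obtain ⟨h, hh, i, hi⟩ := H (Finset.univ.sup M)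
  exact hM i h (le_trans (Finset.le_sup (Finset.mem_univ i)) hh) hi

end Stmt9Aux


/-- if `𝒜₁, …, 𝒜_k` is a Liouville partition of `A` in the `r`-th
direction and each `B_j` has `r`-th coordinate multiset weakly equivalent to that
of `𝒜_j`, then `B₁, …, B_k` form a Liouville partition of `⋃ B_j` in the `r`-th
direction. -/
theorem stmt9 (p : ℕ) [Fact p.Prime] {n k : ℕ} {m : Fin k → ℕ}
    (𝒜 B : (j : Fin k) → Fin (m j) → (Fin n → ℤ_[p])) (r : Fin n)
    (hA : IsLiouvillePartitionDir p 𝒜 r)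
    (hW : ∀ j : Fin k, WeakEquiv1 p (fun t => B j t r) (fun t => 𝒜 j t r)) :
    IsLiouvillePartitionDir p B r := by
  intro l mm hlm a b
  suffices key : ¬ ((∃ z : ℤ, (z : ℤ_[p]) = B l a r - B mm b r) ∨
      ∃ C : ℝ, ∀ m₀ : ℕ, ∃ m' : ℕ, m₀ ≤ m' ∧ 0 < m' ∧
        (padicBracket p (B l a r - B mm b r) m' : ℝ) ≤ C * m') by
    constructor
    · intro hL; exact key (Or.inr hL.2)
    · intro hz; exact key (Or.inl hz)
  intro hP
  obtain ⟨c₁, hc₁, σ₁, hσ₁⟩ := hW l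
  obtain ⟨c₂, hc₂, σ₂, hσ₂⟩ := hW mm
  set β := B l a r - B mm b r with hβ
  -- Step 1: a uniform "good" statement for β along an unbounded set of heights.
  obtain ⟨C, hC0, hR⟩ : ∃ C : ℝ, 0 ≤ C ∧
      ∀ m₀ : ℕ, ∃ h : ℕ, m₀ ≤ h ∧ 0 < h ∧ Stmt9Aux.Good p β h (C * h) := by
    rcases hP with ⟨z, hz⟩ | ⟨C₀, hC₀⟩
    · refine ⟨((|z| : ℤ) : ℝ), by exact_mod_cast abs_nonneg z,
        fun m₀ => ⟨max m₀ 1, le_max_left _ _, ?_, ?_⟩⟩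
      · omega
      · have hd : (p : ℤ_[p]) ^ (max m₀ 1) ∣ β - (z : ℤ_[p]) := by rw [← hz]; simp
        refine Stmt9Aux.Good.of_witness hd ?_
        have h1 : (1 : ℝ) ≤ ((max m₀ 1 : ℕ) : ℝ) := by exact_mod_cast le_max_right m₀ 1
        have h2 : (0 : ℝ) ≤ ((|z| : ℤ) : ℝ) := by exact_mod_cast abs_nonneg z
        have h3 : |(z : ℝ)| = ((|z| : ℤ) : ℝ) := by rw [Int.cast_abs]
        nlinarith
    · refine ⟨|C₀|, abs_nonneg _, fun m₀ => ?_⟩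
      obtain ⟨m', hm', hpos, hb⟩ := hC₀ m₀
      refine ⟨m', hm', hpos, Or.inl (hb.trans ?_)⟩
      exact mul_le_mul_of_nonneg_right (le_abs_self C₀) (by positivity)
  -- Step 2: for arbitrarily large h, some pair of 𝒜-elements is "good".
  have hEx : ∀ m₀ : ℕ, ∃ h : ℕ, m₀ ≤ h ∧ ∃ ts : Fin (m l) × Fin (m mm),
      0 < h ∧ Stmt9Aux.Good p (𝒜 l ts.1 r - 𝒜 mm ts.2 r) h ((C + c₁ + c₂) * h) := by
    intro m₀
    obtain ⟨h, hm₀, hpos, hg⟩ := hR m₀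
    refine ⟨h, hm₀, ⟨(σ₁ h).symm a, (σ₂ h).symm b⟩, hpos, ?_⟩
    have h1 := hσ₁ h hpos ((σ₁ h).symm a)
    have h2 := hσ₂ h hpos ((σ₂ h).symm b)
    simp only [Equiv.apply_symm_apply] at h1 h2
    have hh0 : (0 : ℝ) ≤ (h : ℝ) := by positivity
    have g1 : Stmt9Aux.Good p (-(B l a r - 𝒜 l ((σ₁ h).symm a) r)) h (c₁ * h) :=
      Stmt9Aux.Good.neg (Or.inl h1) (mul_nonneg hc₁.le hh0)
    have g2 : Stmt9Aux.Good p (B mm b r - 𝒜 mm ((σ₂ h).symm b) r) h (c₂ * h) := Or.inl h2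
    have hcomb := (hg.add g1 (mul_nonneg hC0 hh0) (mul_nonneg hc₁.le hh0)).add g2
      (add_nonneg (mul_nonneg hC0 hh0) (mul_nonneg hc₁.le hh0)) (mul_nonneg hc₂.le hh0)
    have heq : β + -(B l a r - 𝒜 l ((σ₁ h).symm a) r) + (B mm b r - 𝒜 mm ((σ₂ h).symm b) r)
        = 𝒜 l ((σ₁ h).symm a) r - 𝒜 mm ((σ₂ h).symm b) r := by rw [hβ]; ring
    rw [heq] at hcomb
    exact hcomb.mono (le_of_eq (by ring))
  -- Step 3: pigeonhole to fix the pair.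
  have : Nonempty (Fin (m l) × Fin (m mm)) := ⟨(a, b)⟩
  obtain ⟨ts, hts⟩ := Stmt9Aux.pigeonhole _ hEx
  have hA2 := hA l mm hlm ts.1 ts.2
  -- Step 4: conclude.
  by_cases hdvd : ∀ m₀ : ℕ, ∃ h : ℕ, m₀ ≤ h ∧ (p : ℤ_[p]) ^ h ∣ (𝒜 l ts.1 r - 𝒜 mm ts.2 r)
  · exact hA2.2 ⟨0, by rw [Stmt9Aux.eq_zero_of_forall_dvd hdvd]; simp⟩
  · push_neg at hdvd
    obtain ⟨m₁, hm₁⟩ := hdvd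
    refine hA2.1 ⟨hA2.2, C + c₁ + c₂, fun m₀ => ?_⟩
    obtain ⟨h, hh, hpos, hg⟩ := hts (max m₀ m₁)
    refine ⟨h, le_trans (le_max_left _ _) hh, hpos, ?_⟩
    rcases hg with hb | hd
    · exact hb
    · exact absurd hd (hm₁ h (le_trans (le_max_right _ _) hh))
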